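/- Let V = F_3^5 with quadratic form q(a) = a_0^2 - a_1^2 - ... - a_4^2 and a_0,...,a_4 an orthogonal basis with q(a_0) = 1 and q(a_i) = -1 for i ≥ 1. If D : V → C changes sign under the reflection in each a_i (i.e. D(R_i(α)) = -D(α) for all α, where R_i is the orthogonal reflection in a_i), then D is determined up to a complex scalar; equivalently, the space of such functions D is at most one-dimensional. -/

import Mathlib

abbrev V : Type := Fin 5 → ZMod 3

def q (a : V) : ZMod 3 := a 0 ^ 2 - a 1 ^ 2 - a 2 ^ 2 - a 3 ^ 2 - a 4 ^ 2

def b (x y : V) : ZMod 3 := x 0 * y 0 - x 1 * y 1 - x 2 * y 2 - x 3 * y 3 - x 4 * y 4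

def reflIn (a v : V) : V := v - (2 * b a v / b a a) • a

noncomputable def sg : ZMod 3 → ℂ := fun t => if t = 1 then 1 else if t = 2 then -1 else 0

lemma sg0 : sg 0 = 0 := by unfold sg; rw [if_neg (by decide), if_neg (by decide)]
lemma sg1 : sg 1 = 1 := by unfold sg; rw [if_pos rfl]
lemma sg2 : sg 2 = -1 := by unfold sg; rw [if_neg (by decide), if_pos rfl]

lemma q_eq_b (u : V) : q u = b u u := by simp [q, b]; ring

lemma b_add_right (u y z : V) : b u (y + z) = b u y + b u z := by
  simp [b, Pi.add_apply]; ring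

lemma b_smul_right (u : V) (c : ZMod 3) (y : V) : b u (c • y) = c * b u y := by
  simp [b, Pi.smul_apply, smul_eq_mul]; ring

theorem stmt11 (a : Fin 5 → V)
    (horth : ∀ i j, i ≠ j → b (a i) (a j) = 0)
    (h0 : q (a 0) = 1) (hs : ∀ i, i ≠ 0 → q (a i) = -1)
    (D E : V → ℂ)
    (hD : ∀ i v, D (reflIn (a i) v) = - D v)
    (hE : ∀ i v, E (reflIn (a i) v) = - E v) :
    ∃ c : ℂ, D = c • E ∨ E = c • D := by
  classical
  have hbd : ∀ i, b (a i) (a i) ≠ 0 := by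
    intro i
    by_cases h : i = 0
    · rw [h, ← q_eq_b, h0]; decide
    · rw [← q_eq_b, hs i h]; decide
  have hba : ∀ i j, b (a i) (a j) = if i = j then b (a i) (a i) else 0 := by
    intro i j
    by_cases h : i = j
    · simp [h]
    · simp [h, horth i j h]
  have hbv : ∀ (i : Fin 5) (x : Fin 5 → ZMod 3),
      b (a i) (∑ j, x j • a j) = x i * b (a i) (a i) := by
    intro i x
    rw [Fin.sum_univ_five, b_add_right, b_add_right, b_add_right, b_add_right,
        b_smul_right, b_smul_right, b_smul_right, b_smul_right, b_smul_right,
        hba i 0, hba i 1, hba i 2, hba i 3, hba i 4]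
    fin_cases i <;> simp
  have hrefl : ∀ (i : Fin 5) (x : Fin 5 → ZMod 3),
      reflIn (a i) (∑ j, x j • a j) = ∑ j, Function.update x i (-(x i)) j • a j := by
    intro i x
    have hc : 2 * b (a i) (∑ j, x j • a j) / b (a i) (a i) = 2 * x i := by
      rw [hbv, mul_div_assoc, mul_div_cancel_right₀ _ (hbd i)]
    rw [reflIn, hc]
    fin_cases i <;>
      · rw [Fin.sum_univ_five, Fin.sum_univ_five]
        simp [Function.update]
        module
  have key : ∀ (D : V → ℂ), (∀ i v, D (reflIn (a i) v) = - D v) →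
      ∀ x : Fin 5 → ZMod 3, D (∑ j, x j • a j)
        = (sg (x 0) * sg (x 1) * sg (x 2) * sg (x 3) * sg (x 4)) * D (∑ j, a j) := by
    intro D hD
    have hstep : ∀ (i : Fin 5) (x : Fin 5 → ZMod 3),
        D (∑ j, x j • a j) = sg (x i) * D (∑ j, Function.update x i 1 j • a j) := by
      intro i x
      have hz : x i = 0 ∨ x i = 1 ∨ x i = 2 := by
        have h3 : ∀ z : ZMod 3, z = 0 ∨ z = 1 ∨ z = 2 := by decide
        exact h3 (x i)
      have hd := hD i (∑ j, x j • a j)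
      rw [hrefl i x] at hd
      rcases hz with h | h | h
      · have hx : Function.update x i (-(x i)) = x := by
          funext j
          rcases eq_or_ne j i with rfl | hj
          · simp [h]
          · simp [Function.update_of_ne hj]
        rw [hx] at hd
        rw [h, sg0, zero_mul]
        linear_combination hd / 2
      · have hx : Function.update x i 1 = x := by
          funext j
          rcases eq_or_ne j i with rfl | hj
          · simp [h]
          · simp [Function.update_of_ne hj]
        rw [hx, h, sg1, one_mul]
      · have hne : -(x i) = 1 := by rw [h]; decide
        rw [hne] at hd
        rw [h, sg2]
        linear_combination hd
    intro x
    set x1 := Function.update x 0 1 with hx1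
    set x2 := Function.update x1 1 1 with hx2
    set x3 := Function.update x2 2 1 with hx3
    set x4 := Function.update x3 3 1 with hx4
    set x5 := Function.update x4 4 1 with hx5
    have hone : (∑ j, x5 j • a j) = ∑ j, a j := by
      apply Finset.sum_congr rfl
      intro j _
      have : x5 j = 1 := by
        fin_cases j <;> simp [hx5, hx4, hx3, hx2, hx1, Function.update]
      rw [this, one_smul]
    have e0 := hstep 0 x
    have e1 := hstep 1 x1
    have e2 := hstep 2 x2
    have e3 := hstep 3 x3
    have e4 := hstep 4 x4
    rw [e0, ← hx1, e1, ← hx2, e2, ← hx3, e3, ← hx4, e4, ← hx5, hone]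
    have v1 : x1 1 = x 1 := by simp [hx1, Function.update]
    have v2 : x2 2 = x 2 := by simp [hx2, hx1, Function.update]
    have v3 : x3 3 = x 3 := by simp [hx3, hx2, hx1, Function.update]
    have v4 : x4 4 = x 4 := by simp [hx4, hx3, hx2, hx1, Function.update]
    rw [v1, v2, v3, v4]
    ring
  have hsurj : ∀ v : V, ∃ x : Fin 5 → ZMod 3, v = ∑ j, x j • a j := by
    have hinj : Function.Injective (fun x : Fin 5 → ZMod 3 => ∑ j, x j • a j) := by
      intro x y hxy
      simp only at hxy
      funext i
      have h1 := hbv i x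
      rw [hxy] at h1
      exact mul_right_cancel₀ (hbd i) (h1.symm.trans (hbv i y))
    intro v
    obtain ⟨x, hx⟩ := Finite.injective_iff_surjective.mp hinj v
    exact ⟨x, hx.symm⟩
  by_cases hEw : E (∑ j, a j) = 0
  · refine ⟨0, Or.inr ?_⟩
    funext v
    obtain ⟨x, hx⟩ := hsurj v
    simp [hx, key E hE x, hEw]
  · refine ⟨D (∑ j, a j) / E (∑ j, a j), Or.inl ?_⟩
    funext v
    obtain ⟨x, hx⟩ := hsurj v
    rw [hx, key D hD x, Pi.smul_apply, key E hE x, smul_eq_mul]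
    field_simp
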